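/- (Uniqueness from leading monomials when all orders are less than 2.) Let (u₁,…,u_p) and (u′₁,…,u′_p) be two solutions of the escape-region equations such that for each 1 ≤ j < p, u_j and u′_j are nonzero with the same leading term m_j, and ord(m_j) < 2μ. Then u_j = u′_j for all j. -/

import Mathlib

/-- `f` has leading term (leading monomial) `β·X^q`: the coefficient of `X^q` is `β ≠ 0`
and all lower coefficients vanish. -/
def HasLeadingTerm (f : PowerSeries ℂ) (β : ℂ) (q : ℕ) : Prop :=
  β ≠ 0 ∧ PowerSeries.coeff q f = β ∧ ∀ n < q, PowerSeries.coeff n f = 0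

/-- `(u 1, …, u p)` is a solution of the escape-region equations of period `p`
(where `X` plays the role of `𝔱^{1/μ}`, i.e. of `ξ^{1/μ}` with `ξ = 1/(3a)`):
`u p = 0` and `X^{2μ}(u_{j+1} − u₁) = u_j²(u_j − 1)` for `1 ≤ j < p`. -/
def IsEscapeSolution (p μ : ℕ) (u : ℕ → PowerSeries ℂ) : Prop :=
  u p = 0 ∧ ∀ j, 1 ≤ j → j < p →
    (PowerSeries.X : PowerSeries ℂ) ^ (2 * μ) * (u (j + 1) - u 1)
      = (u j) ^ 2 * (u j - 1)

/-- The error `E_j(w) = X^{2μ}(w_{j+1} − w₁) − w_j²(w_j − 1)`. -/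
noncomputable def Err (μ : ℕ) (w : ℕ → PowerSeries ℂ) (j : ℕ) : PowerSeries ℂ :=
  (PowerSeries.X : PowerSeries ℂ) ^ (2 * μ) * (w (j + 1) - w 1) - (w j) ^ 2 * (w j - 1)

theorem uniqueness_small_order (p μ : ℕ) (hp : 1 ≤ p) (hμ : 1 ≤ μ)
    (u u' : ℕ → PowerSeries ℂ)
    (hu : IsEscapeSolution p μ u) (hu' : IsEscapeSolution p μ u')
    (β : ℕ → ℂ) (q : ℕ → ℕ)
    (hlead : ∀ j, 1 ≤ j → j < p → HasLeadingTerm (u j) (β j) (q j))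
    (hlead' : ∀ j, 1 ≤ j → j < p → HasLeadingTerm (u' j) (β j) (q j))
    (hq : ∀ j, 1 ≤ j → j < p → q j < 2 * μ) :
    ∀ j, 1 ≤ j → j ≤ p → u j = u' j := by
  classical
  set d : ℕ → PowerSeries ℂ := fun k => u k - u' k with hd
  have dp : d p = 0 := by simp [hd, hu.1, hu'.1]
  set H : ℕ → PowerSeries ℂ :=
    fun k => u k ^ 2 + u k * u' k + u' k ^ 2 - (u k + u' k) with hH
  have hid : ∀ k, 1 ≤ k → k < p →
      (PowerSeries.X : PowerSeries ℂ) ^ (2 * μ) * (d (k + 1) - d 1) = d k * H k := by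
    intro k h1 h2
    have e1 := hu.2 k h1 h2
    have e2 := hu'.2 k h1 h2
    simp only [hd, hH]
    linear_combination e1 - e2
  -- low coefficients of H vanish
  have hXu : ∀ k, 1 ≤ k → k < p → (PowerSeries.X : PowerSeries ℂ) ^ (q k) ∣ u k := by
    intro k h1 h2
    exact PowerSeries.X_pow_dvd_iff.mpr (fun m hm => (hlead k h1 h2).2.2 m hm)
  have hXu' : ∀ k, 1 ≤ k → k < p → (PowerSeries.X : PowerSeries ℂ) ^ (q k) ∣ u' k := by
    intro k h1 h2
    exact PowerSeries.X_pow_dvd_iff.mpr (fun m hm => (hlead' k h1 h2).2.2 m hm)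
  have hXH : ∀ k, 1 ≤ k → k < p → (PowerSeries.X : PowerSeries ℂ) ^ (q k) ∣ H k := by
    intro k h1 h2
    have a := hXu k h1 h2
    have b := hXu' k h1 h2
    have : (PowerSeries.X : PowerSeries ℂ) ^ (q k) ∣
        (u k ^ 2 + u k * u' k + u' k ^ 2) := by
      exact dvd_add (dvd_add (dvd_pow a two_ne_zero) (Dvd.dvd.mul_right a _))
        (dvd_pow b two_ne_zero)
    exact dvd_sub this (dvd_add a b)
  -- the coefficient of H at q k is nonzero
  have hHq : ∀ k, 1 ≤ k → k < p → PowerSeries.coeff (q k) (H k) ≠ 0 := by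
    intro k h1 h2
    have hβ := hlead k h1 h2
    have hβ' := hlead' k h1 h2
    by_cases hq0 : q k = 0
    · -- constant term is 1
      have e1 := hu.2 k h1 h2
      have hc : PowerSeries.constantCoeff (u k ^ 2 * (u k - 1)) = 0 := by
        rw [← e1]
        have : (PowerSeries.constantCoeff) ((PowerSeries.X : PowerSeries ℂ) ^ (2 * μ)) = 0 := by
          rw [map_pow, PowerSeries.constantCoeff_X]
          exact zero_pow (by omega)
        rw [map_mul, this, zero_mul]
      set σ := PowerSeries.constantCoeff (u k) with hσ
      have hσβ : σ = β k := by
        rw [hσ, ← PowerSeries.coeff_zero_eq_constantCoeff_apply, ← hq0, hβ.2.1]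
      have hcc : σ ^ 2 * (σ - 1) = 0 := by
        simpa [map_mul, map_pow, map_sub] using hc
      have hσ1 : σ = 1 := by
        rcases mul_eq_zero.mp hcc with h | h
        · exact absurd (pow_eq_zero_iff (n := 2) (by norm_num) |>.mp h)
            (by rw [hσβ]; exact hβ.1)
        · exact sub_eq_zero.mp h
      have hσ' : PowerSeries.constantCoeff (u' k) = σ := by
        rw [← PowerSeries.coeff_zero_eq_constantCoeff_apply, ← hq0, hβ'.2.1, ← hσβ]
      rw [hq0]
      simp only [hH, PowerSeries.coeff_zero_eq_constantCoeff_apply, map_sub, map_add,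
        map_mul, map_pow, hσ', ← hσ, hσ1]
      norm_num
    · -- q k ≥ 1 : coefficient is -2 β k
      have hq1 : 1 ≤ q k := Nat.one_le_iff_ne_zero.mpr hq0
      have hsq : ∀ f g : PowerSeries ℂ,
          (PowerSeries.X : PowerSeries ℂ) ^ (q k) ∣ f →
          (PowerSeries.X : PowerSeries ℂ) ^ (q k) ∣ g →
          PowerSeries.coeff (q k) (f * g) = 0 := by
        intro f g hf hg
        have : (PowerSeries.X : PowerSeries ℂ) ^ (q k + q k) ∣ f * g := by
          rw [pow_add]; exact mul_dvd_mul hf hg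
        exact PowerSeries.X_pow_dvd_iff.mp this _ (by omega)
      have a := hXu k h1 h2
      have b := hXu' k h1 h2
      have hval : PowerSeries.coeff (q k) (H k) = -(2 * β k) := by
        simp only [hH, map_sub, map_add]
        rw [pow_two, pow_two, hsq _ _ a a, hsq _ _ a b, hsq _ _ b b, hβ.2.1, hβ'.2.1]
        ring
      rw [hval]
      simp only [neg_ne_zero]
      exact mul_ne_zero two_ne_zero hβ.1
  -- main induction: X^n divides d j for all n
  have main : ∀ n : ℕ, ∀ j, 1 ≤ j → j < p → (PowerSeries.X : PowerSeries ℂ) ^ n ∣ d j := by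
    intro n
    induction n with
    | zero => intro j _ _; simp
    | succ n IH =>
      intro j hj1 hjp
      by_cases hn : n ≤ q j
      · -- coefficients agree up through q j
        have : (PowerSeries.X : PowerSeries ℂ) ^ (q j + 1) ∣ d j := by
          rw [PowerSeries.X_pow_dvd_iff]
          intro m hm
          have hb := hlead j hj1 hjp
          have hb' := hlead' j hj1 hjp
          simp only [hd, map_sub]
          rcases Nat.lt_or_ge m (q j) with h | h
          · rw [hb.2.2 m h, hb'.2.2 m h, sub_zero]
          · have hm' : m = q j := by omega
            rw [hm', hb.2.1, hb'.2.1, sub_self]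
        exact dvd_trans (pow_dvd_pow _ (by omega)) this
      · -- use the functional equation
        have h1 : (PowerSeries.X : PowerSeries ℂ) ^ n ∣ d (j + 1) - d 1 := by
          have hd1 : (PowerSeries.X : PowerSeries ℂ) ^ n ∣ d 1 :=
            IH 1 le_rfl (by omega)
          have hdj1 : (PowerSeries.X : PowerSeries ℂ) ^ n ∣ d (j + 1) := by
            rcases Nat.lt_or_ge (j + 1) p with h | h
            · exact IH (j + 1) (by omega) h
            · have : j + 1 = p := by omega
              rw [this, dp]; exact dvd_zero _
          exact dvd_sub hdj1 hd1
        have hbig : (PowerSeries.X : PowerSeries ℂ) ^ (2 * μ + n) ∣ d j * H j := by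
          rw [← hid j hj1 hjp]
          obtain ⟨c, hc⟩ := h1
          exact ⟨c, by rw [hc, pow_add]; ring⟩
        obtain ⟨e, he⟩ := IH j hj1 hjp
        obtain ⟨h', hh'⟩ := hXH j hj1 hjp
        -- d j * H j = X^(n + q j) * (e * h')
        have hprod : d j * H j =
            (PowerSeries.X : PowerSeries ℂ) ^ (n + q j) * (e * h') := by
          rw [he, hh', pow_add]; ring
        have hcoeff : PowerSeries.coeff (n + q j) (d j * H j) =
            PowerSeries.coeff 0 (e * h') := by
          rw [hprod]
          have := PowerSeries.coeff_X_pow_mul (e * h') (n + q j) 0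
          simpa using this
        have hzero : PowerSeries.coeff (n + q j) (d j * H j) = 0 := by
          apply PowerSeries.X_pow_dvd_iff.mp hbig
          have := hq j hj1 hjp
          omega
        have hzero' : PowerSeries.coeff 0 (e * h') = 0 := by
          rw [← hcoeff]; exact hzero
        have hh'0 : PowerSeries.coeff 0 h' ≠ 0 := by
          intro h0
          apply hHq j hj1 hjp
          rw [hh']
          have := PowerSeries.coeff_X_pow_mul h' (q j) 0
          simpa [h0] using this
        have he0 : PowerSeries.coeff 0 e = 0 := by
          have : PowerSeries.coeff 0 e * PowerSeries.coeff 0 h' = 0 := by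
            simpa [PowerSeries.coeff_zero_eq_constantCoeff_apply, map_mul] using hzero'
          exact (mul_eq_zero.mp this).resolve_right hh'0
        rw [he]
        rw [PowerSeries.X_pow_dvd_iff]
        intro m hm
        rcases Nat.lt_or_ge m n with h | h
        · have hXe : (PowerSeries.X : PowerSeries ℂ) ^ n ∣
              (PowerSeries.X : PowerSeries ℂ) ^ n * e := Dvd.intro _ rfl
          exact PowerSeries.X_pow_dvd_iff.mp hXe m h
        · have hm' : m = n := by omega
          rw [hm']
          have := PowerSeries.coeff_X_pow_mul e n 0
          simpa [he0] using this
  -- conclude d j = 0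
  have dzero : ∀ j, 1 ≤ j → j < p → d j = 0 := by
    intro j h1 h2
    ext m
    rw [map_zero]
    exact PowerSeries.X_pow_dvd_iff.mp (main (m + 1) j h1 h2) m (by omega)
  intro j h1 h2
  rcases Nat.lt_or_ge j p with h | h
  · have := dzero j h1 h
    simpa [hd, sub_eq_zero] using this
  · have hj : j = p := by omega
    rw [hj, hu.1, hu'.1]
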